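/- (Kingman's formula) Let R be a Rota-Baxter operator of weight 1 on an associative algebra A and R̃ = id - R. Then for all u ∈ A and n ≥ 1: R(u)ⁿ = R( R(u)ⁿ - (-R̃(u))ⁿ ). -/
import Mathlib


/-- Kingman's formula: `R(u)ⁿ = R(R(u)ⁿ - (-R̃(u))ⁿ)` for `n ≥ 1`, where
`R̃ = id - R`. -/
theorem stmt_10 {K : Type*} [Field K] [CharZero K] {A : Type*} [Ring A] [Algebra K A]
    (R : A →ₗ[K] A)
    (hRB : ∀ x y : A, R x * R y + R (x * y) = R (R x * y + x * R y)) :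
    ∀ (u : A) (n : ℕ), 1 ≤ n → R u ^ n = R (R u ^ n - (-(u - R u)) ^ n) := by
  intro u n hn
  induction n with
  | zero => omega
  | succ n ih =>
    rcases Nat.eq_zero_or_pos n with h0 | h1
    · subst h0
      simp [neg_sub, sub_sub_cancel]
    · have hc : R (R u ^ n - (-(u - R u)) ^ n) = R u ^ n := (ih h1).symm
      have key := hRB u (R u ^ n - (-(u - R u)) ^ n)
      rw [hc] at key
      have harg : R u * (R u ^ n - (-(u - R u)) ^ n) + u * R u ^ n
          - u * (R u ^ n - (-(u - R u)) ^ n)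
          = R u ^ (n + 1) - (-(u - R u)) ^ (n + 1) := by
        rw [pow_succ' (R u) n, pow_succ' (-(u - R u)) n]
        noncomm_ring
      calc R u ^ (n + 1) = R u * R u ^ n := by rw [pow_succ']
        _ = R (R u * (R u ^ n - (-(u - R u)) ^ n) + u * R u ^ n)
              - R (u * (R u ^ n - (-(u - R u)) ^ n)) := by
            rw [← key]; abel
        _ = R (R u * (R u ^ n - (-(u - R u)) ^ n) + u * R u ^ n
              - u * (R u ^ n - (-(u - R u)) ^ n)) := by rw [map_sub]
        _ = R (R u ^ (n + 1) - (-(u - R u)) ^ (n + 1)) := by rw [harg]
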